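/- For every ε ∈ (0, 1 − √(1 − λ₂/λ₁)) and every s ∈ (−1, 1), |G_ε'(s)| ≤ |G'(s)|, where G'(s) = (λ₂/2)·ln((1+s)/(1−s)). -/

import Mathlib

/-- The logarithmic part `G(s) = (λ₂/2)[(1+s)ln((1+s)/2) + (1−s)ln((1−s)/2)]`. -/
noncomputable def Glog (l2 s : ℝ) : ℝ :=
  l2 / 2 * ((1 + s) * Real.log ((1 + s) / 2) + (1 - s) * Real.log ((1 - s) / 2))

/-- Its first derivative `G'(s) = (λ₂/2)ln((1+s)/(1−s))` on `(−1,1)`. -/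
noncomputable def GlogD (l2 s : ℝ) : ℝ :=
  l2 / 2 * Real.log ((1 + s) / (1 - s))

/-- Its second derivative `G''(s) = λ₂/(1−s²)` on `(−1,1)`. -/
noncomputable def GlogDD (l2 s : ℝ) : ℝ :=
  l2 / (1 - s ^ 2)

/-- The regularization `G_ε` of `G`: the second-order Taylor polynomial of `G` at
`1−ε` (resp. `−1+ε`) for `s ≥ 1−ε` (resp. `s ≤ −1+ε`), and `G` itself in between. -/
noncomputable def Geps (l2 ε s : ℝ) : ℝ :=
  if 1 - ε ≤ s then
    Glog l2 (1 - ε) + GlogD l2 (1 - ε) * (s - (1 - ε))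
      + GlogDD l2 (1 - ε) / 2 * (s - (1 - ε)) ^ 2
  else if s ≤ -1 + ε then
    Glog l2 (-1 + ε) + GlogD l2 (-1 + ε) * (s - (-1 + ε))
      + GlogDD l2 (-1 + ε) / 2 * (s - (-1 + ε)) ^ 2
  else Glog l2 s

/-- The logarithmic potential `F(s) = (λ₁/2)(1 − s²) + G(s)`. -/
noncomputable def Flog (l1 l2 s : ℝ) : ℝ :=
  l1 / 2 * (1 - s ^ 2) + Glog l2 s

/-- The regularized potential `F_ε(s) = (λ₁/2)(1 − s²) + G_ε(s)`. -/
noncomputable def Feps (l1 l2 ε s : ℝ) : ℝ :=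
  l1 / 2 * (1 - s ^ 2) + Geps l2 ε s

open Real Set Filter

lemma hasDerivAt_Glog (l2 s : ℝ) (h1 : -1 < s) (h2 : s < 1) :
    HasDerivAt (Glog l2) (GlogD l2 s) s := by
  have hp : (0:ℝ) < 1 + s := by linarith
  have hm : (0:ℝ) < 1 - s := by linarith
  have ha : HasDerivAt (fun x : ℝ => 1 + x) 1 s := (hasDerivAt_id s).const_add 1
  have ha' : HasDerivAt (fun x : ℝ => 1 - x) (-1) s := by
    exact (hasDerivAt_id s).const_sub 1
  have hc : HasDerivAt (fun x : ℝ => Real.log ((1 + x) / 2)) ((1/2) / ((1+s)/2)) s :=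
    (ha.div_const 2).log (by positivity)
  have hc' : HasDerivAt (fun x : ℝ => Real.log ((1 - x) / 2)) ((-1/2) / ((1-s)/2)) s :=
    (ha'.div_const 2).log (by positivity)
  have hd := (ha.mul hc).add (ha'.mul hc')
  have : HasDerivAt (fun x : ℝ =>
      (1 + x) * Real.log ((1 + x) / 2) + (1 - x) * Real.log ((1 - x) / 2))
      (Real.log ((1 + s) / 2) - Real.log ((1 - s) / 2)) s := by
    refine hd.congr_deriv ?_
    field_simp
    ring
  have := this.const_mul (l2 / 2)
  refine this.congr_deriv ?_
  unfold GlogD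
  rw [Real.log_div hp.ne' hm.ne', Real.log_div hp.ne' two_ne_zero,
    Real.log_div hm.ne' two_ne_zero]
  ring

lemma hasDerivAt_GlogD (l2 s : ℝ) (h1 : -1 < s) (h2 : s < 1) :
    HasDerivAt (GlogD l2) (GlogDD l2 s) s := by
  have hp : (0:ℝ) < 1 + s := by linarith
  have hm : (0:ℝ) < 1 - s := by linarith
  have ha : HasDerivAt (fun x : ℝ => 1 + x) 1 s := (hasDerivAt_id s).const_add 1
  have ha' : HasDerivAt (fun x : ℝ => 1 - x) (-1) s := by
    exact (hasDerivAt_id s).const_sub 1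
  have hf : HasDerivAt (fun x : ℝ => (1 + x) / (1 - x))
      ((1 * (1 - s) - (1 + s) * (-1)) / (1 - s) ^ 2) s := ha.div ha' hm.ne'
  have := (hf.log (by positivity)).const_mul (l2 / 2)
  refine this.congr_deriv ?_
  have h12 : (1:ℝ) - s ^ 2 ≠ 0 := by nlinarith
  unfold GlogDD
  field_simp
  ring

lemma GlogD_nonneg (l2 s : ℝ) (hl2 : 0 ≤ l2) (h0 : 0 ≤ s) (h1 : s < 1) :
    0 ≤ GlogD l2 s := by
  have hm : (0:ℝ) < 1 - s := by linarith
  apply mul_nonneg (by positivity)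
  apply Real.log_nonneg
  rw [le_div_iff₀ hm]
  linarith

lemma key_ineq (l2 : ℝ) (hl2 : 0 < l2) (a s : ℝ) (ha : 0 ≤ a) (has : a ≤ s) (hs : s < 1) :
    GlogD l2 a + GlogDD l2 a * (s - a) ≤ GlogD l2 s := by
  set c := GlogDD l2 a with hc
  have hmono : MonotoneOn (fun x => GlogD l2 x - c * x) (Icc a s) := by
    have hder : ∀ x, -1 < x → x < 1 →
        HasDerivAt (fun x => GlogD l2 x - c * x) (GlogDD l2 x - c) x := by
      intro x hx1 hx2
      exact (hasDerivAt_GlogD l2 x hx1 hx2).sub (by simpa using (hasDerivAt_id x).const_mul c)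
    apply monotoneOn_of_deriv_nonneg (convex_Icc a s)
    · intro x hx
      exact (hder x (by linarith [hx.1]) (by linarith [hx.2])).continuousAt.continuousWithinAt
    · intro x hx
      rw [interior_Icc] at hx
      exact (hder x (by linarith [hx.1]) (by linarith [hx.2])).differentiableAt.differentiableWithinAt
    · intro x hx
      rw [interior_Icc] at hx
      rw [(hder x (by linarith [hx.1]) (by linarith [hx.2])).deriv]
      have hx0 : 0 ≤ x := le_trans ha hx.1.le
      have h1 : (0:ℝ) < 1 - x ^ 2 := by nlinarith [hx.2]
      have h2 : 1 - x ^ 2 ≤ 1 - a ^ 2 := by nlinarith [hx.1.le]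
      have : c ≤ GlogDD l2 x := by
        rw [hc]
        unfold GlogDD
        gcongr
      linarith
  have := hmono (left_mem_Icc.2 has) (right_mem_Icc.2 has) has
  simp only at this
  nlinarith [this]

lemma hasDerivAt_quad (l2 a x : ℝ) :
    HasDerivAt (fun x => Glog l2 a + GlogD l2 a * (x - a)
      + GlogDD l2 a / 2 * (x - a) ^ 2)
      (GlogD l2 a + GlogDD l2 a * (x - a)) x := by
  have h0 : HasDerivAt (fun x : ℝ => x - a) 1 x := (hasDerivAt_id x).sub_const a
  have h1 := (h0.const_mul (GlogD l2 a)).const_add (Glog l2 a)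
  have h2 := (h0.pow 2).const_mul (GlogDD l2 a / 2)
  refine (h1.add h2).congr_deriv ?_
  push_cast
  ring

lemma lemB (l2 ε : ℝ) (hl2 : 0 < l2) (hε0 : 0 < ε) (hε1 : ε < 1)
    (s : ℝ) (hs1 : 1 - ε ≤ s) (hs2 : s < 1) :
    |deriv (Geps l2 ε) s| ≤ |GlogD l2 s| := by
  have ha0 : (0:ℝ) ≤ 1 - ε := by linarith
  have ha1 : (1:ℝ) - ε < 1 := by linarith
  have hDDpos : 0 < GlogDD l2 (1 - ε) := by
    unfold GlogDD
    have : (0:ℝ) < 1 - (1 - ε) ^ 2 := by nlinarith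
    positivity
  have hd : deriv (Geps l2 ε) s
      = GlogD l2 (1 - ε) + GlogDD l2 (1 - ε) * (s - (1 - ε)) := by
    rcases eq_or_lt_of_le hs1 with heq | hlt
    · -- s = 1 - ε : glue
      subst heq
      have hcond : (1:ℝ) - ε ≤ 1 - ε := le_refl _
      have hGa : Geps l2 ε (1 - ε) = Glog l2 (1 - ε) := by
        simp only [Geps, if_pos hcond]
        ring
      have hIci : HasDerivWithinAt (Geps l2 ε) (GlogD l2 (1 - ε)) (Ici (1 - ε)) (1 - ε) := by
        have h2 : HasDerivWithinAt (Geps l2 ε)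
            (GlogD l2 (1 - ε) + GlogDD l2 (1 - ε) * ((1 - ε) - (1 - ε)))
            (Ici (1 - ε)) (1 - ε) := by
          apply ((hasDerivAt_quad l2 (1 - ε) (1 - ε)).hasDerivWithinAt).congr
          · intro y hy
            simp only [Geps, if_pos (hcond.trans hy)]
          · rw [hGa]; ring
        simpa using h2
      have hIic : HasDerivWithinAt (Geps l2 ε) (GlogD l2 (1 - ε)) (Iic (1 - ε)) (1 - ε) := by
        have hbase : HasDerivWithinAt (Glog l2) (GlogD l2 (1 - ε)) (Iic (1 - ε)) (1 - ε) :=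
          (hasDerivAt_Glog l2 (1 - ε) (by linarith) ha1).hasDerivWithinAt
        apply hbase.congr_of_eventuallyEq ?_ hGa
        filter_upwards [self_mem_nhdsWithin,
          mem_nhdsWithin_of_mem_nhds (Ioi_mem_nhds (show (-1:ℝ) + ε < 1 - ε by linarith))]
          with x hx1 hx2
        rcases eq_or_lt_of_le (Set.mem_Iic.mp hx1) with hxe | hxl
        · rw [hxe]; exact hGa
        · simp only [Geps, if_neg (not_le.2 hxl), if_neg (not_le.2 (show -1 + ε < x from hx2))]
      have huniv := hIic.union hIci
      rw [Iic_union_Ici, hasDerivWithinAt_univ] at huniv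
      rw [huniv.deriv]
      ring
    · -- s > 1 - ε
      have heq2 : Geps l2 ε =ᶠ[nhds s] fun x => Glog l2 (1 - ε)
          + GlogD l2 (1 - ε) * (x - (1 - ε)) + GlogDD l2 (1 - ε) / 2 * (x - (1 - ε)) ^ 2 := by
        filter_upwards [Ioi_mem_nhds hlt] with x hx
        simp only [Geps, if_pos (le_of_lt (show 1 - ε < x from hx))]
      rw [heq2.deriv_eq]
      exact (hasDerivAt_quad l2 (1 - ε) s).deriv
  have hkey := key_ineq l2 hl2 (1 - ε) s ha0 hs1 hs2
  have hD0 : 0 ≤ GlogD l2 (1 - ε) := GlogD_nonneg l2 (1 - ε) hl2.le ha0 ha1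
  have hterm : 0 ≤ GlogDD l2 (1 - ε) * (s - (1 - ε)) := mul_nonneg hDDpos.le (by linarith)
  rw [hd, abs_of_nonneg (by linarith),
    abs_of_nonneg (GlogD_nonneg l2 s hl2.le (le_trans ha0 hs1) hs2)]
  exact hkey

lemma Glog_even (l2 s : ℝ) : Glog l2 (-s) = Glog l2 s := by
  unfold Glog
  rw [show (1 + -s : ℝ) = 1 - s from by ring, show (1 - -s : ℝ) = 1 + s from by ring]
  ring

lemma GlogD_odd (l2 s : ℝ) : GlogD l2 (-s) = -GlogD l2 s := by
  unfold GlogD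
  rw [show (1 + -s : ℝ) = 1 - s from by ring, show (1 - -s : ℝ) = 1 + s from by ring,
    show (1 - s) / (1 + s) = ((1 + s) / (1 - s))⁻¹ from (inv_div _ _).symm, Real.log_inv]
  ring

lemma GlogDD_even (l2 s : ℝ) : GlogDD l2 (-s) = GlogDD l2 s := by
  unfold GlogDD
  rw [neg_sq]

lemma Geps_even (l2 ε s : ℝ) (hε1 : ε < 1) : Geps l2 ε (-s) = Geps l2 ε s := by
  have hpt : (-1 + ε : ℝ) = -(1 - ε) := by ring
  unfold Geps
  rcases le_or_gt (1 - ε) s with hC | hC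
  · rw [if_neg (by linarith), if_pos (by linarith), if_pos hC, hpt,
      Glog_even, GlogD_odd, GlogDD_even]
    ring
  rcases le_or_gt s (-1 + ε) with hD | hD
  · rw [if_pos (show 1 - ε ≤ -s by linarith), if_neg (show ¬(1 - ε ≤ s) by linarith),
      if_pos hD, hpt, Glog_even, GlogD_odd, GlogDD_even]
    ring
  · rw [if_neg (by linarith), if_neg (by linarith), if_neg (not_le.2 hC),
      if_neg (not_le.2 hD), Glog_even]

/-- For every `ε ∈ (0, 1 − √(1 − λ₂/λ₁))` and every `s ∈ (−1,1)`,
`|G_ε'(s)| ≤ |G'(s)|`, where `G'(s) = (λ₂/2)ln((1+s)/(1−s))`. -/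
theorem abs_deriv_Geps_le (l1 l2 : ℝ) (hl2 : 0 < l2) (hl : l2 < l1)
    (ε : ℝ) (hε : ε ∈ Set.Ioo 0 (1 - Real.sqrt (1 - l2 / l1))) :
    ∀ s ∈ Set.Ioo (-1 : ℝ) 1,
      |deriv (Geps l2 ε) s| ≤ |l2 / 2 * Real.log ((1 + s) / (1 - s))| := by
  obtain ⟨hε0, hεlt⟩ := hε
  have hsq : 0 ≤ Real.sqrt (1 - l2 / l1) := Real.sqrt_nonneg _
  have hε1 : ε < 1 := by linarith
  intro s hs
  obtain ⟨hs1, hs2⟩ := hs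
  show |deriv (Geps l2 ε) s| ≤ |GlogD l2 s|
  rcases le_or_gt (1 - ε) s with h | h
  · exact lemB l2 ε hl2 hε0 hε1 s h hs2
  rcases le_or_gt s (-1 + ε) with h' | h'
  · have h1 : deriv (Geps l2 ε) s = -deriv (Geps l2 ε) (-s) := by
      conv_lhs => rw [show (Geps l2 ε) = fun x => Geps l2 ε (-x) from
        funext fun x => (Geps_even l2 ε x hε1).symm]
      rw [deriv_comp_neg]
    have h2 : GlogD l2 s = -GlogD l2 (-s) := by
      have := GlogD_odd l2 (-s)
      rw [neg_neg] at this
      rw [this]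
    rw [h1, abs_neg, h2, abs_neg]
    exact lemB l2 ε hl2 hε0 hε1 (-s) (by linarith) (by linarith)
  · have hd : deriv (Geps l2 ε) s = GlogD l2 s := by
      have heq : Geps l2 ε =ᶠ[nhds s] Glog l2 := by
        filter_upwards [Ioo_mem_nhds h' h] with x hx
        simp only [Geps, if_neg (not_le.2 hx.2), if_neg (not_le.2 hx.1)]
      rw [heq.deriv_eq]
      exact (hasDerivAt_Glog l2 s (by linarith) (by linarith)).deriv
    rw [hd]
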